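/- Let E be a Banach space and suppose S : (0,T] → (E →L E) satisfies ‖S(t)‖ ≤ C/t for all t ∈ (0,T] (parabolic smoothing of e^{tA}A). Then for any τ ∈ (0,1) with n·τ ≤ T and any family (I_k) with ‖I_k‖ ≤ M·τ^{3-p} (for fixed p ∈ (0,1)), the sum ‖Σ_{k=0}^{n-2} S((n-k-1)τ) I_k‖ is bounded by C·M·τ^{2-p}·(1 + |log τ|). -/

import Mathlib

open Set in
/-- Summation estimate with parabolic smoothing for the fractional-order
convergence of classical Strang splitting. -/
theorem stmt_2 (E : Type*) [NormedAddCommGroup E] [NormedSpace ℝ E] [CompleteSpace E]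
    (T C p : ℝ) (hT : 0 < T) (hC : 0 < C) (hp : p ∈ Set.Ioo (0 : ℝ) 1) :
    ∃ C' > 0, ∀ (S : ℝ → E →L[ℝ] E) (I : ℕ → E) (M τ : ℝ) (n : ℕ),
      0 ≤ M → τ ∈ Set.Ioo (0 : ℝ) 1 → (n : ℝ) * τ ≤ T →
      (∀ t ∈ Set.Ioc (0 : ℝ) T, ‖S t‖ ≤ C / t) →
      (∀ k, ‖I k‖ ≤ M * τ ^ (3 - p)) →
      ‖∑ k ∈ Finset.range (n - 1), (S (((n : ℝ) - k - 1) * τ)) (I k)‖ ≤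
        C' * M * τ ^ (2 - p) * (1 + |Real.log τ|) := by
  refine ⟨C * (1 + |Real.log T|), by positivity, ?_⟩
  intro S I M τ n hM hτ hnτ hS hI
  obtain ⟨hτ0, hτ1⟩ := hτ
  have hτ2p : (0:ℝ) < τ ^ (2 - p) := Real.rpow_pos_of_pos hτ0 _
  rcases Nat.eq_zero_or_pos (n - 1) with hm | hm
  · rw [hm]
    simp only [Finset.range_zero, Finset.sum_empty, norm_zero]
    positivity
  set m := n - 1 with hmdef
  have hn1 : 1 ≤ n := le_trans hm (Nat.sub_le _ _)
  have hnm : n = m + 1 := (Nat.succ_pred_eq_of_pos hn1).symm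
  -- per-term bound
  have hterm : ∀ k ∈ Finset.range m,
      ‖(S (((n : ℝ) - k - 1) * τ)) (I k)‖ ≤
        C * M * τ ^ (2 - p) * (((m - k : ℕ) : ℝ))⁻¹ := by
    intro k hk
    rw [Finset.mem_range] at hk
    set d : ℕ := m - k with hd
    have hd1 : 1 ≤ d := by omega
    have hd1' : (1:ℝ) ≤ (d:ℝ) := by exact_mod_cast hd1
    have hdn : (d:ℝ) ≤ (n:ℝ) := by exact_mod_cast (by omega : d ≤ n)
    have heq : ((n : ℝ) - k - 1) = (d : ℝ) := by
      have : (n : ℕ) = d + k + 1 := by omega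
      rw [this]; push_cast; ring
    rw [heq]
    have ht0 : 0 < (d:ℝ) * τ := by positivity
    have htT : (d:ℝ) * τ ≤ T :=
      le_trans (mul_le_mul_of_nonneg_right hdn hτ0.le) hnτ
    calc ‖(S ((d:ℝ) * τ)) (I k)‖ ≤ ‖S ((d:ℝ) * τ)‖ * ‖I k‖ :=
          ContinuousLinearMap.le_opNorm _ _
      _ ≤ (C / ((d:ℝ) * τ)) * (M * τ ^ (3 - p)) := by
          apply mul_le_mul (hS _ ⟨ht0, htT⟩) (hI k) (norm_nonneg _)
          positivity
      _ = C * M * τ ^ (2 - p) * ((d:ℝ))⁻¹ := by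
          rw [show (3:ℝ) - p = (2 - p) + 1 by ring, Real.rpow_add hτ0,
            Real.rpow_one]
          field_simp
  have hsum := norm_sum_le_of_le (Finset.range m) hterm
  rw [← Finset.mul_sum] at hsum
  -- harmonic sum bound
  have hhar : ∑ k ∈ Finset.range m, (((m - k : ℕ) : ℝ))⁻¹ = (harmonic m : ℝ) := by
    rw [show (harmonic m : ℝ) = ∑ j ∈ Finset.range m, (((j + 1 : ℕ) : ℝ))⁻¹ by
      simp [harmonic]]
    rw [← Finset.sum_range_reflect (fun j => (((j + 1 : ℕ) : ℝ))⁻¹) m]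
    apply Finset.sum_congr rfl
    intro j hj
    rw [Finset.mem_range] at hj
    congr 2
    omega
  have hlog : (harmonic m : ℝ) ≤ 1 + |Real.log T| + |Real.log τ| := by
    have h1 : (harmonic m : ℝ) ≤ 1 + Real.log m := harmonic_le_one_add_log m
    have hm0 : (0:ℝ) < (m:ℝ) := by exact_mod_cast hm
    have hmT : (m:ℝ) ≤ T / τ := by
      rw [le_div_iff₀ hτ0]
      refine le_trans ?_ hnτ
      have : (m:ℝ) ≤ (n:ℝ) := by exact_mod_cast Nat.sub_le n 1
      nlinarith
    have h2 : Real.log m ≤ Real.log (T / τ) := Real.log_le_log hm0 hmT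
    rw [Real.log_div hT.ne' hτ0.ne'] at h2
    have hTle : Real.log T ≤ |Real.log T| := le_abs_self _
    have hτle : -Real.log τ ≤ |Real.log τ| := neg_le_abs _
    linarith
  calc ‖∑ k ∈ Finset.range m, (S (((n : ℝ) - k - 1) * τ)) (I k)‖
      ≤ C * M * τ ^ (2 - p) * ∑ k ∈ Finset.range m, (((m - k : ℕ) : ℝ))⁻¹ := hsum
    _ = C * M * τ ^ (2 - p) * (harmonic m : ℝ) := by rw [hhar]
    _ ≤ C * M * τ ^ (2 - p) * (1 + |Real.log T| + |Real.log τ|) := by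
        apply mul_le_mul_of_nonneg_left hlog; positivity
    _ ≤ C * (1 + |Real.log T|) * M * τ ^ (2 - p) * (1 + |Real.log τ|) := by
        have hCM : 0 ≤ C * M * τ ^ (2 - p) := by positivity
        have h1 : 1 + |Real.log T| + |Real.log τ| ≤
            (1 + |Real.log T|) * (1 + |Real.log τ|) := by
          nlinarith [abs_nonneg (Real.log T), abs_nonneg (Real.log τ)]
        nlinarith
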